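/- arXiv:2010.03117 — 4 statements merged into one kernel-verified Lean document; each statement's English description precedes it below -/
import Mathlib

section
/- Let G be a countable group acting on a countable set X with finite point stabilizers and finitely many orbits. Then there exist a finite subgroup Λ ≤ G, a proper symmetric length function |·|_{G/Λ} : G/Λ → ℝ_{≥0}, and a function |·|_X : X → ℝ_{≥0} such that (i) |g·x|_X ≤ |gΛ|_{G/Λ} + |x|_X for all g ∈ G, x ∈ X; and (ii) {x ∈ X : |x|_X ≤ R} is finite for every R > 0. -/
/-- For a countable group G acting on a countable set X with finite stabilizers and finitely
many orbits, there are a finite subgroup Λ ≤ G, a proper symmetric length function on G/Λ,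
and a height function on X which is subadditively compatible with the action and has finite
sublevel sets. -/
theorem stmt3 (G : Type*) [Group G] [Countable G] (X : Type*) [Countable X] [MulAction G X]
    (hstab : ∀ x : X, Finite (MulAction.stabilizer G x))
    (horb : Finite (MulAction.orbitRel.Quotient G X)) :
    ∃ Λ : Subgroup G, Finite Λ ∧
      ∃ (L : G ⧸ Λ → ℝ) (hX : X → ℝ),
        (∀ c, 0 ≤ L c) ∧
        (∀ g : G, L (QuotientGroup.mk g) = 0 ↔ g ∈ Λ) ∧
        (∀ g h : G, L (QuotientGroup.mk (g * h)) ≤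
          L (QuotientGroup.mk g) + L (QuotientGroup.mk h)) ∧
        (∀ g : G, L (QuotientGroup.mk g⁻¹) = L (QuotientGroup.mk g)) ∧
        (∀ R : ℝ, 0 < R → {c : G ⧸ Λ | L c ≤ R}.Finite) ∧
        (∀ x, 0 ≤ hX x) ∧
        (∀ (g : G) (x : X), hX (g • x) ≤ L (QuotientGroup.mk g) + hX x) ∧
        (∀ R : ℝ, 0 < R → {x : X | hX x ≤ R}.Finite) := by
  obtain ⟨f, hf⟩ := Countable.exists_injective_nat G
  set w : G → ℕ := fun g => f g + f g⁻¹ + 1 with hw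
  have hwsymm : ∀ g : G, w g⁻¹ = w g := by
    intro g; simp only [hw, inv_inv]; ring
  have hwpos : ∀ g, 1 ≤ w g := fun g => Nat.le_add_left 1 _
  set S : G → Set ℕ := fun g => {n | ∃ l : List G, l.prod = g ∧ (l.map w).sum = n} with hS
  have hSne : ∀ g, (S g).Nonempty := fun g => ⟨w g, [g], by simp, by simp⟩
  set N : G → ℕ := fun g => sInf (S g) with hNdef
  have hNmem : ∀ g, N g ∈ S g := fun g => Nat.sInf_mem (hSne g)
  have hNle : ∀ g n, n ∈ S g → N g ≤ n := fun g n h => Nat.sInf_le h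
  have hN1 : N 1 = 0 := Nat.le_zero.mp (hNle 1 0 ⟨[], by simp, by simp⟩)
  have hNzero : ∀ g, N g = 0 → g = 1 := by
    intro g hg
    obtain ⟨l, hl, hsum⟩ := hNmem g
    rw [hg] at hsum
    cases l with
    | nil => simpa using hl.symm
    | cons a t =>
      simp only [List.map_cons, List.sum_cons] at hsum
      have := hwpos a; omega
  have hNmul : ∀ g h : G, N (g * h) ≤ N g + N h := by
    intro g h
    obtain ⟨l1, hl1, hs1⟩ := hNmem g
    obtain ⟨l2, hl2, hs2⟩ := hNmem h
    exact hNle _ _ ⟨l1 ++ l2, by simp [hl1, hl2], by simp [hs1, hs2]⟩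
  have hNinvle : ∀ g : G, N g⁻¹ ≤ N g := by
    intro g
    obtain ⟨l, hl, hs⟩ := hNmem g
    refine hNle _ _ ⟨(l.map fun x => x⁻¹).reverse, ?_, ?_⟩
    · rw [← List.prod_inv_reverse, hl]
    · rw [List.map_reverse, List.sum_reverse, List.map_map]
      rw [← hs]
      congr 1
      exact List.map_congr_left fun x _ => hwsymm x
  have hNinv : ∀ g : G, N g⁻¹ = N g := fun g =>
    le_antisymm (hNinvle g) (by simpa using hNinvle g⁻¹)
  -- properness of N
  have hNproper : ∀ n : ℕ, {g : G | N g ≤ n}.Finite := by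
    intro n
    have hA : {s : G | w s ≤ n}.Finite := by
      have : {s : G | w s ≤ n} ⊆ f ⁻¹' (Set.Iic n) := by
        intro s hs; simp only [Set.mem_preimage, Set.mem_Iic]
        have := hs; simp only [Set.mem_setOf_eq, hw] at this; omega
      exact ((Set.finite_Iic n).preimage hf.injOn).subset this
    have hlists : {l : List G | l.length ≤ n ∧ ∀ s ∈ l, w s ≤ n}.Finite := by
      have := hA
      have hfin : Finite {s : G | w s ≤ n} := hA.to_subtype
      have hL : {l : List {s : G | w s ≤ n} | l.length ≤ n}.Finite :=
        List.finite_length_le _ n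
      have : {l : List G | l.length ≤ n ∧ ∀ s ∈ l, w s ≤ n} ⊆
          (List.map (Subtype.val : {s : G | w s ≤ n} → G)) ''
            {l : List {s : G | w s ≤ n} | l.length ≤ n} := by
        rintro l ⟨hlen, hmem⟩
        refine ⟨l.attach.map fun x => ⟨x.1, hmem x.1 x.2⟩, ?_, ?_⟩
        · show List.length _ ≤ n
          simpa using hlen
        · simp [List.map_map]
      exact (hL.image _).subset this
    have hsub : {g : G | N g ≤ n} ⊆
        List.prod '' {l : List G | l.length ≤ n ∧ ∀ s ∈ l, w s ≤ n} := by
      intro g hg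
      obtain ⟨l, hl, hs⟩ := hNmem g
      have hle : (l.map w).sum ≤ n := by rw [hs]; exact hg
      refine ⟨l, ⟨?_, ?_⟩, hl⟩
      · calc l.length = (l.map w).length := by simp
          _ ≤ (l.map w).sum := List.length_le_sum_of_one_le _ (by
              intro i hi
              obtain ⟨a, _, rfl⟩ := List.mem_map.mp hi
              exact hwpos a)
          _ ≤ n := hle
      · intro s hsmem
        calc w s ≤ (l.map w).sum := List.single_le_sum (fun _ _ => Nat.zero_le _) _
              (List.mem_map_of_mem (f := w) hsmem)
          _ ≤ n := hle
    exact (hlists.image _).subset hsub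
  -- orbit representatives
  set Q := MulAction.orbitRel.Quotient G X with hQ
  set ρ : X → X := fun x => (Quotient.mk'' x : Q).out with hρ
  have hρeq : ∀ (g : G) (x : X), ρ (g • x) = ρ x := by
    intro g x
    have : (Quotient.mk'' (g • x) : Q) = Quotient.mk'' x :=
      Quotient.sound' ((MulAction.orbitRel_apply).mpr (MulAction.mem_orbit x g))
    simp only [hρ, this]
  have hρorb : ∀ x : X, ∃ h : G, h • ρ x = x := by
    intro x
    have h1 : (Quotient.mk'' (ρ x) : Q) = Quotient.mk'' x := Quotient.out_eq' _
    have h2 := Quotient.exact' h1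
    rw [MulAction.orbitRel_apply, MulAction.mem_orbit_iff] at h2
    obtain ⟨g, hg⟩ := h2
    exact ⟨g⁻¹, by rw [← hg]; simp⟩
  set SX : X → Set ℕ := fun x => {n | ∃ h : G, h • ρ x = x ∧ N h = n} with hSX
  have hSXne : ∀ x, (SX x).Nonempty := by
    intro x; obtain ⟨h, hh⟩ := hρorb x; exact ⟨N h, h, hh, rfl⟩
  set M : X → ℕ := fun x => sInf (SX x) with hM
  have hMmem : ∀ x, M x ∈ SX x := fun x => Nat.sInf_mem (hSXne x)
  have hMcompat : ∀ (g : G) (x : X), M (g • x) ≤ N g + M x := by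
    intro g x
    obtain ⟨h, hhx, hhN⟩ := hMmem x
    have : (g * h) • ρ (g • x) = g • x := by rw [hρeq, mul_smul, hhx]
    calc M (g • x) ≤ N (g * h) := Nat.sInf_le ⟨g * h, this, rfl⟩
      _ ≤ N g + N h := hNmul g h
      _ = N g + M x := by rw [hhN]
  have hMproper : ∀ n : ℕ, {x : X | M x ≤ n}.Finite := by
    intro n
    have hrange : (Set.range ρ).Finite := by
      have : Set.range ρ ⊆ Set.range (Quotient.out : Q → X) := by
        rintro _ ⟨x, rfl⟩; exact ⟨_, rfl⟩
      exact (Set.finite_range _).subset this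
    have hsub : {x : X | M x ≤ n} ⊆
        (fun p : G × X => p.1 • p.2) '' ({g | N g ≤ n} ×ˢ Set.range ρ) := by
      intro x hx
      obtain ⟨h, hhx, hhN⟩ := hMmem x
      exact ⟨(h, ρ x), ⟨by rw [Set.mem_setOf_eq, hhN]; exact hx, ⟨x, rfl⟩⟩, hhx⟩
    exact (((hNproper n).prod hrange).image _).subset hsub
  -- assemble
  have hout : ∀ g : G, (QuotientGroup.mk (s := (⊥ : Subgroup G)) g).out = g := by
    intro g
    have h1 : (QuotientGroup.mk (s := (⊥ : Subgroup G))
        (QuotientGroup.mk (s := (⊥ : Subgroup G)) g).out) = QuotientGroup.mk g :=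
      QuotientGroup.out_eq' _
    have h2 := (QuotientGroup.eq (s := ⊥)).mp h1
    simpa [Subgroup.mem_bot, inv_mul_eq_one] using h2
  refine ⟨⊥, inferInstance, fun c => (N c.out : ℝ), fun x => (M x : ℝ),
    fun c => by positivity, ?_, ?_, ?_, ?_, fun x => by positivity, ?_, ?_⟩
  · intro g
    simp only [hout]
    simp only [Subgroup.mem_bot, Nat.cast_eq_zero]
    exact ⟨hNzero g, fun h => h ▸ hN1⟩
  · intro g h
    simp only [hout, ← Nat.cast_add]
    exact_mod_cast hNmul g h
  · intro g
    simp only [hout]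
    exact congrArg Nat.cast (hNinv g)
  · intro R hR
    have hsub : {c : G ⧸ (⊥ : Subgroup G) | (N c.out : ℝ) ≤ R} ⊆
        QuotientGroup.mk '' {g : G | N g ≤ ⌊R⌋₊} := by
      intro c hc
      exact ⟨c.out, Nat.le_floor hc, QuotientGroup.out_eq' c⟩
    exact (((hNproper ⌊R⌋₊).image _).subset hsub)
  · intro g x
    simp only [hout, ← Nat.cast_add]
    exact_mod_cast hMcompat g x
  · intro R hR
    exact (hMproper ⌊R⌋₊).subset fun x hx => Nat.le_floor hx
end

section
/- Combining the two ℓ¹ estimates: for z = [a₁,…,aₙ] ∈ Z with aᵢ ≠ x for all i, and w = [x,a₁,…,aₙ], let μ(z) := ω(z)/‖ω(z)‖₁ ∈ Prob(X). Then ‖μ(z) − μ(w)‖₁ ≤ 2(2|z|₀ + 1 + |x|_X)/(|z|₀² + |z|₁). In particular, as z → ∞ within Z_x := {[a₁,…,aₙ] : aᵢ ≠ x for all i}, ‖μ(z) − μ([x]∪z)‖₁ → 0. -/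
open Filter Topology

/-- The weight function ω(z) = Σ_{a ∈ z} (|z|₀ + |a|_X)·δ_a ∈ ℓ¹(X). -/
def omegaWt {X : Type*} [DecidableEq X] (h : X → ℝ) (z : Finset X) : X → ℝ :=
  fun x => if x ∈ z then (z.card : ℝ) + h x else 0

/-- μ(z) := ω(z)/‖ω(z)‖₁, using ‖ω(z)‖₁ = |z|₀² + |z|₁. -/
noncomputable def muWt {X : Type*} [DecidableEq X] (h : X → ℝ) (z : Finset X) : X → ℝ :=
  fun x => omegaWt h z x / ((z.card : ℝ) ^ 2 + ∑ a ∈ z, h a)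

lemma muWt_bound {X : Type*} [DecidableEq X] (h : X → ℝ) (h0 : ∀ a, 0 ≤ h a) (x : X)
    (z : Finset X) (hxz : x ∉ z) (hne : z.Nonempty) :
    ∑' y : X, |muWt h z y - muWt h (insert x z) y|
      ≤ 2 * (2 * (z.card : ℝ) + 1 + h x) / ((z.card : ℝ) ^ 2 + ∑ a ∈ z, h a) := by
  set n : ℝ := (z.card : ℝ) with hn
  have hn1 : (1:ℝ) ≤ n := Nat.one_le_cast.mpr hne.card_pos
  have hS : 0 ≤ ∑ a ∈ z, h a := Finset.sum_nonneg fun a _ => h0 a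
  set S := ∑ a ∈ z, h a with hSdef
  have hN : 0 < n^2 + S := by nlinarith
  set D : ℝ := 2*n + 1 + h x with hD
  have hD0 : 0 ≤ D := by nlinarith [h0 x]
  have hcardw : ((insert x z).card : ℝ) = n + 1 := by
    rw [Finset.card_insert_of_notMem hxz]; push_cast; ring
  have hSw : ∑ a ∈ insert x z, h a = h x + S := Finset.sum_insert hxz
  have hN' : ((insert x z).card:ℝ)^2 + ∑ a ∈ insert x z, h a = (n^2+S) + D := by
    rw [hcardw, hSw]; ring
  have hN'0 : 0 < (n^2+S) + D := by linarith
  have hzero : ∀ y ∉ insert x z, |muWt h z y - muWt h (insert x z) y| = 0 := by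
    intro y hy
    have h1 : y ∉ z := fun hz => hy (Finset.mem_insert_of_mem hz)
    simp [muWt, omegaWt, h1, hy]
  rw [tsum_eq_sum hzero, Finset.sum_insert hxz]
  have hxterm : |muWt h z x - muWt h (insert x z) x| = ((n+1) + h x) / ((n^2+S) + D) := by
    have : muWt h z x = 0 := by simp [muWt, omegaWt, hxz]
    rw [this, zero_sub, abs_neg, muWt, omegaWt, hN', if_pos (Finset.mem_insert_self x z), hcardw,
      abs_of_nonneg]
    apply div_nonneg _ (le_of_lt hN'0)
    nlinarith [h0 x]
  have hsum : ∑ y ∈ z, |muWt h z y - muWt h (insert x z) y|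
      ≤ ∑ y ∈ z, ((n + h y) * D + (n^2+S)) / ((n^2+S) * ((n^2+S)+D)) := by
    apply Finset.sum_le_sum
    intro y hy
    have hyw : y ∈ insert x z := Finset.mem_insert_of_mem hy
    have h1 : muWt h z y = (n + h y) / (n^2+S) := by
      rw [muWt, omegaWt, if_pos hy]
    have h2 : muWt h (insert x z) y = ((n+1) + h y) / ((n^2+S)+D) := by
      rw [muWt, omegaWt, if_pos hyw, hcardw, hSw, hD]; ring_nf
    rw [h1, h2, div_sub_div _ _ (ne_of_gt hN) (ne_of_gt hN'0), abs_div,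
      abs_of_pos (mul_pos hN hN'0)]
    rw [div_le_div_iff₀ (mul_pos hN hN'0) (mul_pos hN hN'0)]
    have hy0 := h0 y
    apply mul_le_mul_of_nonneg_right _ (le_of_lt (mul_pos hN hN'0))
    rw [abs_le]
    constructor <;> nlinarith [mul_nonneg (mul_nonneg (by linarith : (0:ℝ) ≤ n + h y) hD0) hS]
  have hsumval : ∑ y ∈ z, ((n + h y) * D + (n^2+S)) / ((n^2+S) * ((n^2+S)+D))
      = ((n^2+S) * D + n * (n^2+S)) / ((n^2+S) * ((n^2+S)+D)) := by
    have e1 : ∑ y ∈ z, (n + h y) = n^2 + S := by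
      rw [Finset.sum_add_distrib, Finset.sum_const, nsmul_eq_mul, ← hn]; ring
    rw [← Finset.sum_div]
    congr 1
    rw [Finset.sum_add_distrib, ← Finset.sum_mul, e1, Finset.sum_const, nsmul_eq_mul, ← hn]
  rw [hxterm]
  calc (n + 1 + h x) / (n^2+S+D) + ∑ y ∈ z, |muWt h z y - muWt h (insert x z) y|
      ≤ (n + 1 + h x) / (n^2+S+D) + ((n^2+S) * D + n * (n^2+S)) / ((n^2+S) * ((n^2+S)+D)) := by
        rw [← hsumval]; linarith [hsum]
    _ = (2 * D) / (n^2+S+D) := by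
        rw [div_add_div _ _ (ne_of_gt hN'0) (ne_of_gt (mul_pos hN hN'0))]
        rw [div_eq_div_iff (by positivity) (ne_of_gt hN'0)]
        ring
    _ ≤ 2 * (2 * n + 1 + h x) / (n^2+S) := by
        rw [← hD]
        apply div_le_div_of_nonneg_left (by linarith) hN (by linarith)


/-- For z ∈ Z_x (i.e. x ∉ z), ‖μ(z) − μ([x]∪z)‖₁ ≤ 2(2|z|₀ + 1 + |x|_X)/(|z|₀² + |z|₁);
in particular the distance tends to 0 as z → ∞ within Z_x (i.e. as |z|₀ + |z|₁ → ∞). -/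
theorem stmt8 (X : Type*) [DecidableEq X] (h : X → ℝ) (h0 : ∀ a, 0 ≤ h a) (x : X) :
    (∀ z : Finset X, x ∉ z → z.Nonempty →
      ∑' y : X, |muWt h z y - muWt h (insert x z) y|
        ≤ 2 * (2 * (z.card : ℝ) + 1 + h x) / ((z.card : ℝ) ^ 2 + ∑ a ∈ z, h a)) ∧
    (∀ zs : ℕ → Finset X, (∀ k, x ∉ zs k) → (∀ k, (zs k).Nonempty) →
      Tendsto (fun k => ((zs k).card : ℝ) + ∑ a ∈ zs k, h a) atTop atTop →
      Tendsto (fun k => ∑' y : X, |muWt h (zs k) y - muWt h (insert x (zs k)) y|)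
        atTop (nhds 0)) := by
  refine ⟨muWt_bound h h0 x, ?_⟩
  intro zs hx hne hT
  set C : ℝ := 1 + h x with hC
  have hC0 : 0 ≤ C := by nlinarith [h0 x]
  set T : ℕ → ℝ := fun k => ((zs k).card : ℝ) + ∑ a ∈ zs k, h a with hTdef
  have hub : ∀ k, ∑' y : X, |muWt h (zs k) y - muWt h (insert x (zs k)) y|
      ≤ 4 / Real.sqrt (T k) + 2 * C / T k := by
    intro k
    set n : ℝ := ((zs k).card : ℝ) with hn
    have hn1 : (1:ℝ) ≤ n := Nat.one_le_cast.mpr (hne k).card_pos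
    have hS : 0 ≤ ∑ a ∈ zs k, h a := Finset.sum_nonneg fun a _ => h0 a
    set S := ∑ a ∈ zs k, h a with hSdef
    have hTpos : 0 < T k := by simp only [hTdef]; nlinarith
    have hNT : T k ≤ n^2 + S := by simp only [hTdef]; nlinarith
    have hN : 0 < n^2 + S := lt_of_lt_of_le hTpos hNT
    have hsT : 0 < Real.sqrt (T k) := Real.sqrt_pos.mpr hTpos
    refine le_trans (muWt_bound h h0 x (zs k) (hx k) (hne k)) ?_
    have hsplit : 2 * (2 * n + 1 + h x) / (n^2 + S) = 4*n/(n^2+S) + 2*C/(n^2+S) := by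
      rw [hC, ← add_div]; ring_nf
    rw [hsplit]
    have h1 : 4*n/(n^2+S) ≤ 4 / Real.sqrt (T k) := by
      rw [div_le_div_iff₀ hN hsT]
      have hle : n ≤ Real.sqrt (n^2+S) :=
        (Real.le_sqrt (by linarith) (le_of_lt hN)).mpr (by linarith)
      have h2 : Real.sqrt (T k) ≤ Real.sqrt (n^2+S) := Real.sqrt_le_sqrt hNT
      have h3 : Real.sqrt (n^2+S) * Real.sqrt (n^2+S) = n^2+S :=
        Real.mul_self_sqrt (le_of_lt hN)
      nlinarith [Real.sqrt_nonneg (T k), Real.sqrt_nonneg (n^2+S)]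
    have h2 : 2*C/(n^2+S) ≤ 2*C/(T k) :=
      div_le_div_of_nonneg_left (by linarith) hTpos hNT
    linarith
  have hlb : ∀ k, 0 ≤ ∑' y : X, |muWt h (zs k) y - muWt h (insert x (zs k)) y| :=
    fun k => tsum_nonneg fun y => abs_nonneg _
  have hg : Tendsto (fun k => 4 / Real.sqrt (T k) + 2 * C / T k) atTop (nhds 0) := by
    have hsq : Tendsto Real.sqrt atTop atTop := by
      apply tendsto_atTop_atTop_of_monotone (fun a b hab => Real.sqrt_le_sqrt hab)
      intro b
      exact ⟨(max b 0)^2, by rw [Real.sqrt_sq (le_max_right _ _)]; exact le_max_left _ _⟩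
    have h1 : Tendsto (fun k => Real.sqrt (T k)) atTop atTop := hsq.comp hT
    have h2 : Tendsto (fun k => 4 / Real.sqrt (T k)) atTop (nhds 0) := by
      simpa [div_eq_mul_inv] using h1.inv_tendsto_atTop.const_mul (4:ℝ)
    have h3 : Tendsto (fun k => 2 * C / T k) atTop (nhds 0) := by
      simpa [div_eq_mul_inv] using hT.inv_tendsto_atTop.const_mul (2*C)
    simpa using h2.add h3
  exact squeeze_zero hlb hub hg
end

section
/- The infinite product measure space (Ω, μ) = ∏_{x ∈ X₀} ({0,1}, p_x δ₀ + q_x δ₁), with p_x ∈ (0,1) and q_x = 1 − p_x, has no atoms if and only if Σ_{x ∈ X₀} min{p_x, q_x} = ∞. -/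
open MeasureTheory Filter

private lemma weier {α : Type*} (f : α → ℝ) :
    ∀ s : Finset α, (∀ x ∈ s, 0 ≤ f x) → (∀ x ∈ s, f x ≤ 1) →
    1 - ∑ x ∈ s, f x ≤ ∏ x ∈ s, (1 - f x) := by
  intro s
  induction s using Finset.cons_induction with
  | empty => simp
  | cons a s ha ih =>
    intro h0 h1
    rw [Finset.sum_cons, Finset.prod_cons]
    have H := ih (fun x hx => h0 x (Finset.mem_cons_of_mem hx))
      (fun x hx => h1 x (Finset.mem_cons_of_mem hx))
    have ha0 := h0 a (Finset.mem_cons_self a s)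
    have ha1 := h1 a (Finset.mem_cons_self a s)
    have hsum : (0:ℝ) ≤ ∑ x ∈ s, f x :=
      Finset.sum_nonneg fun x hx => h0 x (Finset.mem_cons_of_mem hx)
    nlinarith [mul_le_mul_of_nonneg_left H (by linarith : (0:ℝ) ≤ 1 - f a)]

/-- The product probability measure μ = ⊗_{x ∈ X₀} (p_x δ₀ + q_x δ₁) on Ω = {0,1}^{X₀}
(characterized by its values on cylinder sets) has no atoms — every singleton is null —
if and only if Σ_x min{p_x, q_x} = ∞ (i.e. this nonnegative series is not summable). -/
theorem stmt11 (X₀ : Type*) [Countable X₀] (p : X₀ → ℝ)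
    (hp : ∀ x, p x ∈ Set.Ioo (0 : ℝ) 1)
    (μ : Measure (X₀ → Fin 2)) [IsProbabilityMeasure μ]
    (hμ : ∀ (s : Finset X₀) (a : X₀ → Fin 2),
      μ {ω : X₀ → Fin 2 | ∀ x ∈ s, ω x = a x}
        = ∏ x ∈ s, ENNReal.ofReal (if a x = 0 then p x else 1 - p x)) :
    (∀ ω : X₀ → Fin 2, μ {ω} = 0) ↔
      ¬ Summable (fun x : X₀ => min (p x) (1 - p x)) := by
  classical
  set m : X₀ → ℝ := fun x => min (p x) (1 - p x) with hm
  have hm0 : ∀ x, 0 < m x := fun x => lt_min (hp x).1 (by linarith [(hp x).2])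
  have hmlt1 : ∀ x, m x < 1 := fun x => lt_of_le_of_lt (min_le_left _ _) (hp x).2
  constructor
  · -- no atoms → not summable
    intro hatom hsum
    -- construct the heaviest point ω
    set ω : X₀ → Fin 2 := fun x => if p x ≤ 1 - p x then 1 else 0 with hω
    have hval : ∀ x, (if ω x = 0 then p x else 1 - p x) = 1 - m x := by
      intro x
      by_cases h : p x ≤ 1 - p x
      · have : ω x = 1 := by simp [hω, h]
        rw [this]
        have : m x = p x := min_eq_left h
        simp [this]
      · have : ω x = 0 := by simp [hω, h]
        rw [this]
        push_neg at h
        have : m x = 1 - p x := min_eq_right h.le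
        simp [this]
    obtain ⟨F, hF⟩ := hsum.vanishing (Iio_mem_nhds (by norm_num : (0:ℝ) < 1/2))
    set δ : ℝ := (∏ x ∈ F, (1 - m x)) * (1/2) with hδ
    have hδpos : 0 < δ :=
      mul_pos (Finset.prod_pos fun x _ => by linarith [hmlt1 x]) (by norm_num)
    have key : ∀ s : Finset X₀, ENNReal.ofReal δ ≤ μ {ω' | ∀ x ∈ s, ω' x = ω x} := by
      intro s
      rw [hμ s ω, Finset.prod_congr rfl (fun x hx => by rw [hval x]),
        ← ENNReal.ofReal_prod_of_nonneg (fun x _ => by linarith [hmlt1 x])]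
      apply ENNReal.ofReal_le_ofReal
      have hA : ∏ x ∈ F, (1 - m x) ≤ ∏ x ∈ s ∩ F, (1 - m x) := by
        rw [← Finset.prod_sdiff (Finset.inter_subset_right : s ∩ F ⊆ F)]
        have h1 : ∏ x ∈ F \ (s ∩ F), (1 - m x) ≤ 1 :=
          Finset.prod_le_one (fun x _ => by linarith [hmlt1 x])
            (fun x _ => by linarith [hm0 x])
        have h2 : (0:ℝ) ≤ ∏ x ∈ s ∩ F, (1 - m x) :=
          Finset.prod_nonneg fun x _ => by linarith [hmlt1 x]
        exact mul_le_of_le_one_left h2 h1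
      have hB : (1:ℝ)/2 ≤ ∏ x ∈ s \ F, (1 - m x) := by
        have hdisj : Disjoint (s \ F) F := Finset.sdiff_disjoint
        have hsum2 : ∑ x ∈ s \ F, m x < 1/2 := hF _ hdisj
        have := weier m (s \ F) (fun x _ => (hm0 x).le) (fun x _ => (hmlt1 x).le)
        linarith
      calc δ = (∏ x ∈ F, (1 - m x)) * (1/2) := rfl
        _ ≤ (∏ x ∈ s ∩ F, (1 - m x)) * (∏ x ∈ s \ F, (1 - m x)) := by
            apply mul_le_mul hA hB (by norm_num)
            exact Finset.prod_nonneg fun x _ => by linarith [hmlt1 x]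
        _ = ∏ x ∈ s, (1 - m x) := Finset.prod_inter_mul_prod_diff s F _
    by_cases hne : Nonempty X₀
    · obtain ⟨f, hf⟩ := exists_surjective_nat X₀
      set A : ℕ → Set (X₀ → Fin 2) :=
        fun n => {ω' | ∀ x ∈ (Finset.range n).image f, ω' x = ω x} with hA
      have hmeas : ∀ n, MeasurableSet (A n) := by
        intro n
        have : A n = ⋂ x ∈ (Finset.range n).image f, {ω' : X₀ → Fin 2 | ω' x = ω x} := by
          ext ω'; simp [hA]
        rw [this]
        refine Set.Finite.measurableSet_biInter (Finset.finite_toSet _) fun x _ => ?_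
        have heq : {ω' : X₀ → Fin 2 | ω' x = ω x}
            = (fun ω' : X₀ → Fin 2 => ω' x) ⁻¹' {ω x} := by
          ext ω'; simp
        rw [heq]
        exact (measurable_pi_apply x) (measurableSet_singleton (ω x))
      have hanti : Antitone A := by
        intro i j hij ω' hω' x hx
        apply hω'
        exact Finset.image_subset_image (Finset.range_subset_range.mpr hij) hx
      have hd : Directed (· ⊇ ·) A := hanti.directed_ge
      have hsing : (⋂ n, A n) = {ω} := by
        ext ω'
        simp only [Set.mem_iInter, Set.mem_singleton_iff, hA, Set.mem_setOf_eq]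
        constructor
        · intro h
          funext x
          obtain ⟨n, rfl⟩ := hf x
          exact h (n+1) _ (Finset.mem_image_of_mem f (Finset.mem_range.mpr (Nat.lt_succ_self n)))
        · rintro rfl
          intro n x hx
          rfl
      have hiInf := Directed.measure_iInter (μ := μ)
        (fun n => (hmeas n).nullMeasurableSet) hd ⟨0, measure_ne_top μ _⟩
      rw [hsing, hatom ω] at hiInf
      have hle : ENNReal.ofReal δ ≤ (0 : ENNReal) := by
        rw [hiInf]
        exact le_iInf fun n => key _
      have : ENNReal.ofReal δ = 0 := le_antisymm hle (zero_le)
      rw [ENNReal.ofReal_eq_zero] at this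
      linarith
    · -- X₀ empty: the unique singleton has full measure
      set ω0 : X₀ → Fin 2 := fun _ => 0 with hω0def
      have hω0 : ({ω0} : Set (X₀ → Fin 2)) = Set.univ := by
        ext ω'
        simp only [Set.mem_singleton_iff, Set.mem_univ, iff_true]
        funext x
        exact absurd ⟨x⟩ hne
      have h0 := hatom ω0
      rw [hω0, measure_univ] at h0
      exact one_ne_zero h0
  · -- not summable → no atoms
    intro hns ω
    have hwle : ∀ x, (if ω x = 0 then p x else 1 - p x) ≤ 1 - m x := by
      intro x
      have h1 : m x ≤ p x := min_le_left _ _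
      have h2 : m x ≤ 1 - p x := min_le_right _ _
      by_cases h : ω x = 0
      · rw [if_pos h]; linarith
      · rw [if_neg h]; linarith
    have hwpos : ∀ x, 0 < (if ω x = 0 then p x else 1 - p x) := by
      intro x
      by_cases h : ω x = 0 <;> simp [h] <;> [exact (hp x).1; linarith [(hp x).2]]
    have hle : ∀ n : ℕ, μ {ω} ≤ ENNReal.ofReal (Real.exp (-(n:ℝ))) := by
      intro n
      have : ¬ ∀ s : Finset X₀, ∑ x ∈ s, m x ≤ (n : ℝ) := by
        intro h
        exact hns (summable_of_sum_le (fun x => (hm0 x).le) h)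
      push_neg at this
      obtain ⟨s, hs⟩ := this
      have hmono : μ {ω} ≤ μ {ω' | ∀ x ∈ s, ω' x = ω x} :=
        measure_mono (Set.singleton_subset_iff.mpr fun x _ => rfl)
      rw [hμ s ω] at hmono
      refine hmono.trans ?_
      rw [← ENNReal.ofReal_prod_of_nonneg (fun x _ => (hwpos x).le)]
      apply ENNReal.ofReal_le_ofReal
      calc ∏ x ∈ s, (if ω x = 0 then p x else 1 - p x)
          ≤ ∏ x ∈ s, Real.exp (-(m x)) := by
            apply Finset.prod_le_prod (fun x _ => (hwpos x).le)
            intro x _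
            have := Real.add_one_le_exp (-(m x))
            linarith [hwle x]
        _ = Real.exp (∑ x ∈ s, -(m x)) := (Real.exp_sum s _).symm
        _ ≤ Real.exp (-(n:ℝ)) := by
            apply Real.exp_le_exp.mpr
            have hneg : ∑ x ∈ s, -m x = -∑ x ∈ s, m x := by simp
            linarith
    have htend : Tendsto (fun n : ℕ => ENNReal.ofReal (Real.exp (-(n:ℝ)))) atTop (nhds 0) := by
      rw [← ENNReal.ofReal_zero]
      apply ENNReal.tendsto_ofReal
      exact Real.tendsto_exp_atBot.comp
        (tendsto_neg_atBot_iff.mpr tendsto_natCast_atTop_atTop)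
    exact le_antisymm (ge_of_tendsto' htend hle) (zero_le)
end

section
/- Let X be a set, x ∈ X, and let ℓ(x) := ℓ(δ_x) be the left creation operator on F_anti(ℓ²(X)). For f ∈ ℓ^∞(Z) (acting diagonally via ι), set Z_x := {[x₁,…,xₙ] ∈ Z : xᵢ ≠ x for all i} ∪ {⋆}. Then: (1) ι(f)·ℓ(x) = ℓ(x)·ι(f([x, ·])), where f([x, ·]) is the function z = [x₁,…,xₙ] ↦ f([x,x₁,…,xₙ]) on Z_x (and 0 off Z_x); (2) ℓ(x)·ι(f) = ℓ(x)·ι(f·1_{Z_x}). Consequently the commutator satisfies [ℓ(x), ι(f)] = ℓ(x)·ι((f − f([x,·]))·1_{Z_x}). -/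
/-- Commutation relations between the left creation operator ℓ(x) and the diagonal algebra
ℓ^∞(Z) on F_anti(ℓ²(X)) ≅ ℓ²(Finset X): (1) ι(f)ℓ(x) = ℓ(x)ι(f([x,·])), where f([x,·]) is
supported on Z_x = {z : x ∉ z} with value f([x]∪z); (2) ℓ(x)ι(f) = ℓ(x)ι(f·1_{Z_x});
consequently [ℓ(x), ι(f)] = ℓ(x)·ι((f − f([x,·]))·1_{Z_x}). -/
theorem stmt17 (X : Type*) [LinearOrder X] (x : X)
    (Lx : lp (fun _ : Finset X => ℂ) 2 →L[ℂ] lp (fun _ : Finset X => ℂ) 2)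
    (hLx : ∀ (v : lp (fun _ : Finset X => ℂ) 2) (S : Finset X),
      (Lx v : ∀ _ : Finset X, ℂ) S =
        if x ∈ S then (-1 : ℂ) ^ (S.filter (· < x)).card *
          (v : ∀ _ : Finset X, ℂ) (S.erase x) else 0)
    (f : Finset X → ℂ) (hf : ∃ C : ℝ, ∀ S, ‖f S‖ ≤ C)
    (Tf Tf' Tcut Tdiff : lp (fun _ : Finset X => ℂ) 2 →L[ℂ] lp (fun _ : Finset X => ℂ) 2)
    (hTf : ∀ v S, (Tf v : ∀ _ : Finset X, ℂ) S = f S * (v : ∀ _ : Finset X, ℂ) S)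
    (hTf' : ∀ v S, (Tf' v : ∀ _ : Finset X, ℂ) S =
      (if x ∈ S then 0 else f (insert x S)) * (v : ∀ _ : Finset X, ℂ) S)
    (hTcut : ∀ v S, (Tcut v : ∀ _ : Finset X, ℂ) S =
      (if x ∈ S then 0 else f S) * (v : ∀ _ : Finset X, ℂ) S)
    (hTdiff : ∀ v S, (Tdiff v : ∀ _ : Finset X, ℂ) S =
      (if x ∈ S then 0 else f S - f (insert x S)) * (v : ∀ _ : Finset X, ℂ) S) :
    Tf ∘L Lx = Lx ∘L Tf' ∧
    Lx ∘L Tf = Lx ∘L Tcut ∧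
    Lx ∘L Tf - Tf ∘L Lx = Lx ∘L Tdiff := by

  have h1 : Tf ∘L Lx = Lx ∘L Tf' := by
    ext v S
    simp only [ContinuousLinearMap.comp_apply, hTf, hLx, hTf']
    by_cases hx : x ∈ S
    · simp [hx, Finset.insert_erase hx]; ring
    · simp [hx]
  have h2 : Lx ∘L Tf = Lx ∘L Tcut := by
    ext v S
    simp only [ContinuousLinearMap.comp_apply, hLx, hTf, hTcut]
    by_cases hx : x ∈ S
    · simp [hx]
    · simp [hx]
  have h3 : Lx ∘L Tf - Tf ∘L Lx = Lx ∘L Tdiff := by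
    ext v S
    have := hLx (Tf v) S
    simp only [ContinuousLinearMap.sub_apply, ContinuousLinearMap.comp_apply,
      lp.coeFn_sub, Pi.sub_apply, hLx, hTf, hTdiff]
    by_cases hx : x ∈ S
    · simp [hx, Finset.insert_erase hx]; ring
    · simp [hx]
  exact ⟨h1, h2, h3⟩
end
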